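/- Fix N ∈ ℕ. Let Y₀ be a random variable with values in {0,…,N}, independent of (P,R), and let Y₁ be a random variable whose conditional distribution given (Y₀, P, R) = (k, p, r) is that of B₁ + B₂ with B₁, B₂ independent, B₁ ~ Binomial(k, r), B₂ ~ Binomial(N−k, 1−p). Assume Y₁ has the same distribution as Y₀ (stationarity). Then the probability generating function φ(z) := E[z^{Y₀}] satisfies, for every z ≥ 0, the fixed-point equation φ(z) = E[ ((1−P)z + P)^{N} · φ( (Rz + 1−R) / ((1−P)z + P) ) ]. -/

import Mathlib

open MeasureTheory ProbabilityTheory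

/-- The probability mass function of the binomial distribution with `n` trials and success
probability `q`, evaluated at `j`. -/
noncomputable def binomPMF (n : ℕ) (q : ℝ) (j : ℕ) : ℝ :=
  (n.choose j : ℝ) * q ^ j * (1 - q) ^ (n - j)

/-- The pmf at `m` of `B₁ + B₂` with `B₁ ~ Binomial(k, r)` and `B₂ ~ Binomial(N − k, 1 − p)`
independent. -/
noncomputable def convPMF (N k : ℕ) (p r : ℝ) (m : ℕ) : ℝ :=
  ∑ j ∈ Finset.range (m + 1), binomPMF k r j * binomPMF (N - k) (1 - p) (m - j)

lemma binom_gen (n : ℕ) (q z : ℝ) :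
    ∑ j ∈ Finset.range (n + 1), binomPMF n q j * z ^ j = (q * z + (1 - q)) ^ n := by
  rw [add_pow]
  refine Finset.sum_congr rfl fun j hj => ?_
  simp only [binomPMF, mul_pow]
  ring

lemma binomPMF_zero {n j : ℕ} (h : n < j) (q : ℝ) : binomPMF n q j = 0 := by
  simp [binomPMF, Nat.choose_eq_zero_of_lt h]

lemma key_alg (N k : ℕ) (hk : k ≤ N) (p r z : ℝ) :
    ∑ m ∈ Finset.range (N + 1), z ^ m * convPMF N k p r m
      = (r * z + (1 - r)) ^ k * ((1 - p) * z + p) ^ (N - k) := by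
  have h1 : ∀ m ∈ Finset.range (N + 1), z ^ m * convPMF N k p r m
      = ∑ j ∈ Finset.range (m + 1),
          (binomPMF k r j * z ^ j) * (binomPMF (N - k) (1 - p) (m - j) * z ^ (m - j)) := by
    intro m _
    rw [convPMF, Finset.mul_sum]
    refine Finset.sum_congr rfl fun j hj => ?_
    rw [Finset.mem_range, Nat.lt_succ_iff] at hj
    have : z ^ m = z ^ j * z ^ (m - j) := by
      rw [← pow_add, Nat.add_sub_cancel' hj]
    rw [this]; ring
  rw [Finset.sum_congr rfl h1]
  set a : ℕ → ℝ := fun j => binomPMF k r j * z ^ j with ha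
  set b : ℕ → ℝ := fun i => binomPMF (N - k) (1 - p) i * z ^ i with hb
  have swap : ∑ m ∈ Finset.range (N + 1), ∑ j ∈ Finset.range (m + 1), a j * b (m - j)
      = ∑ j ∈ Finset.range (N + 1), ∑ m ∈ Finset.Icc j N, a j * b (m - j) := by
    refine Finset.sum_comm' fun m j => ?_
    simp only [Finset.mem_range, Finset.mem_Icc, Nat.lt_succ_iff]
    omega
  rw [swap]
  have reix : ∀ j ∈ Finset.range (N + 1),
      ∑ m ∈ Finset.Icc j N, a j * b (m - j) = a j * ∑ i ∈ Finset.range (N + 1 - j), b i := by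
    intro j hj
    rw [← Finset.Ico_add_one_right_eq_Icc, Finset.sum_Ico_eq_sum_range, Finset.mul_sum]
    refine Finset.sum_congr rfl fun i _ => ?_
    congr 1
    congr 1
    omega
  rw [Finset.sum_congr rfl reix]
  -- restrict outer sum to range (k+1)
  have houter : ∑ j ∈ Finset.range (N + 1), a j * ∑ i ∈ Finset.range (N + 1 - j), b i
      = ∑ j ∈ Finset.range (k + 1), a j * ∑ i ∈ Finset.range (N + 1 - j), b i := by
    refine (Finset.sum_subset (Finset.range_subset_range.2 (by omega)) fun j _ hj => ?_).symm
    rw [Finset.mem_range, Nat.lt_succ_iff, not_le] at hj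
    have : a j = 0 := by simp [ha, binomPMF_zero hj]
    rw [this, zero_mul]
  rw [houter]
  have hinner : ∀ j ∈ Finset.range (k + 1),
      a j * ∑ i ∈ Finset.range (N + 1 - j), b i
        = a j * ∑ i ∈ Finset.range (N - k + 1), b i := by
    intro j hj
    rw [Finset.mem_range, Nat.lt_succ_iff] at hj
    congr 1
    refine (Finset.sum_subset (Finset.range_subset_range.2 (by omega)) fun i _ hi => ?_).symm
    rw [Finset.mem_range, not_lt] at hi
    have : N - k < i := by omega
    simp [hb, binomPMF_zero this]
  rw [Finset.sum_congr rfl hinner, ← Finset.sum_mul, binom_gen, binom_gen]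
  ring_nf

lemma choose_le_two_pow' (n j : ℕ) : n.choose j ≤ 2 ^ n := by
  rcases le_or_gt j n with h | h
  · calc n.choose j ≤ ∑ m ∈ Finset.range (n + 1), n.choose m :=
        Finset.single_le_sum (fun i _ => Nat.zero_le _)
          (Finset.mem_range.2 (Nat.lt_succ_of_le h))
    _ = 2 ^ n := Nat.sum_range_choose n
  · simp [Nat.choose_eq_zero_of_lt h]

lemma binomPMF_bound {q : ℝ} (h0 : 0 ≤ q) (h1 : q ≤ 1) {n N : ℕ} (hn : n ≤ N) (j : ℕ) :
    |binomPMF n q j| ≤ 2 ^ N := by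
  have h2 : (0:ℝ) ≤ 1 - q := by linarith
  have hb : 0 ≤ binomPMF n q j := by
    unfold binomPMF; positivity
  rw [abs_of_nonneg hb]
  unfold binomPMF
  calc (n.choose j : ℝ) * q ^ j * (1 - q) ^ (n - j)
      ≤ (n.choose j : ℝ) * 1 * 1 := by
        apply mul_le_mul (mul_le_mul le_rfl (pow_le_one₀ h0 h1) (by positivity) (by positivity))
          (pow_le_one₀ h2 (by linarith)) (by positivity) (by positivity)
    _ = (n.choose j : ℝ) := by ring
    _ ≤ (2:ℝ) ^ n := by exact_mod_cast Nat.cast_le.2 (choose_le_two_pow' n j)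
    _ ≤ (2:ℝ) ^ N := by apply pow_le_pow_right₀ (by norm_num) hn

lemma convPMF_bound {p r : ℝ} (hp0 : 0 ≤ p) (hp1 : p ≤ 1) (hr0 : 0 ≤ r) (hr1 : r ≤ 1)
    {N k : ℕ} (hk : k ≤ N) {m : ℕ} (hm : m ≤ N) :
    |convPMF N k p r m| ≤ (N + 1) * 4 ^ N := by
  calc |convPMF N k p r m|
      ≤ ∑ j ∈ Finset.range (m + 1), |binomPMF k r j * binomPMF (N - k) (1 - p) (m - j)| :=
        Finset.abs_sum_le_sum_abs _ _
    _ ≤ ∑ j ∈ Finset.range (m + 1), (2:ℝ) ^ N * 2 ^ N := by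
        refine Finset.sum_le_sum fun j _ => ?_
        rw [abs_mul]
        exact mul_le_mul (binomPMF_bound hr0 hr1 hk j)
          (binomPMF_bound (by linarith) (by linarith) (Nat.sub_le N k) _)
          (abs_nonneg _) (by positivity)
    _ = (m + 1) * (2 ^ N * 2 ^ N) := by
        rw [Finset.sum_const, Finset.card_range]; push_cast; ring
    _ ≤ (N + 1) * 4 ^ N := by
        have : (2:ℝ) ^ N * 2 ^ N = 4 ^ N := by
          rw [← mul_pow]; norm_num
        rw [this]
        have hm' : (m:ℝ) + 1 ≤ N + 1 := by exact_mod_cast Nat.succ_le_succ hm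
        apply mul_le_mul_of_nonneg_right hm' (by positivity)

lemma meas_comp3 {Ω : Type*} [MeasurableSpace Ω] {Y : Ω → ℕ} {P R : Ω → ℝ}
    (hY : Measurable Y) (hP : Measurable P) (hR : Measurable R) {F : ℕ → ℝ → ℝ → ℝ}
    (hF : ∀ k, Measurable fun pr : ℝ × ℝ => F k pr.1 pr.2) :
    Measurable fun ω => F (Y ω) (P ω) (R ω) := by
  have h : Measurable fun q : (ℝ × ℝ) × ℕ => F q.2 q.1.1 q.1.2 :=
    measurable_from_prod_countable_left fun k => hF k
  exact h.comp ((hP.prodMk hR).prodMk hY)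

lemma pgf_expand {Ω : Type*} [MeasurableSpace Ω] (μ : Measure Ω) [IsFiniteMeasure μ]
    {Y : Ω → ℕ} (hY : Measurable Y) {N : ℕ} (hYN : ∀ᵐ ω ∂μ, Y ω ≤ N) (w : ℝ) :
    ∫ ω, w ^ Y ω ∂μ = ∑ k ∈ Finset.range (N + 1), (μ {ω | Y ω = k}).toReal * w ^ k := by
  have hpt : ∀ᵐ ω ∂μ, w ^ Y ω
      = ∑ k ∈ Finset.range (N + 1), Set.indicator {ω' | Y ω' = k} (fun _ => w ^ k) ω := by
    filter_upwards [hYN] with ω hω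
    simp only [Set.indicator_apply, Set.mem_setOf_eq]
    rw [Finset.sum_ite_eq, if_pos (Finset.mem_range.2 (Nat.lt_succ_of_le hω))]
  rw [integral_congr_ae hpt, integral_finset_sum]
  · refine Finset.sum_congr rfl fun k _ => ?_
    rw [integral_indicator_const _ (show MeasurableSet {ω' | Y ω' = k} from hY (measurableSet_singleton k)), smul_eq_mul, measureReal_def]
  · intro k _
    exact (integrable_const (w ^ k)).indicator (show MeasurableSet {ω' | Y ω' = k} from hY (measurableSet_singleton k))

/-- In the stationary resampling model, the probability generating function
`φ(z) := E[z^{Y₀}]` satisfies, for every `z ≥ 0`,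
`φ(z) = E[((1−P)z + P)^N · φ((Rz + 1−R)/((1−P)z + P))]`. -/
theorem stmt_15
    {Ω : Type*} [MeasurableSpace Ω] (μ : Measure Ω) [IsProbabilityMeasure μ]
    (P R : Ω → ℝ) (hP : Measurable P) (hR : Measurable R)
    (hPR : ∀ᵐ ω ∂μ, P ω ∈ Set.Ioo (0 : ℝ) 1 ∧ R ω ∈ Set.Ioo (0 : ℝ) 1)
    (N : ℕ) (Y₀ Y₁ : Ω → ℕ) (hY₀ : Measurable Y₀) (hY₁ : Measurable Y₁)
    (hY₀N : ∀ ω, Y₀ ω ≤ N)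
    (hindep : IndepFun Y₀ (fun ω => (P ω, R ω)) μ)
    (hcond : ∀ (m : ℕ) (s : Set (ℕ × ℝ × ℝ)), MeasurableSet s →
      (μ {ω | Y₁ ω = m ∧ (Y₀ ω, P ω, R ω) ∈ s}).toReal
        = ∫ ω in {ω | (Y₀ ω, P ω, R ω) ∈ s}, convPMF N (Y₀ ω) (P ω) (R ω) m ∂μ)
    (hstat : Measure.map Y₁ μ = Measure.map Y₀ μ) :
    ∀ z : ℝ, 0 ≤ z →
      (∫ ω, z ^ Y₀ ω ∂μ)
        = ∫ ω, ((1 - P ω) * z + P ω) ^ N *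
            (∫ ω', ((R ω * z + 1 - R ω) / ((1 - P ω) * z + P ω)) ^ Y₀ ω' ∂μ) ∂μ := by
  intro z hz
  classical
  set g : Ω → ℝ := fun ω => (1 - P ω) * z + P ω with hgdef
  set A : Ω → ℝ := fun ω => R ω * z + 1 - R ω with hAdef
  have hgmeas : Measurable g := by fun_prop
  have hAmeas : Measurable A := by fun_prop
  have hY₀N' : ∀ᵐ ω ∂μ, Y₀ ω ≤ N := Filter.Eventually.of_forall hY₀N
  have hbound : ∀ᵐ ω ∂μ, |A ω| ≤ z + 1 ∧ |g ω| ≤ z + 1 ∧ 0 < g ω := by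
    filter_upwards [hPR] with ω hω
    obtain ⟨⟨hp0, hp1⟩, hr0, hr1⟩ := hω
    have h1 : 0 < A ω := by simp only [hAdef]; nlinarith
    have h2 : A ω ≤ z + 1 := by simp only [hAdef]; nlinarith
    have h3 : 0 < g ω := by simp only [hgdef]; nlinarith
    have h4 : g ω ≤ z + 1 := by simp only [hgdef]; nlinarith
    exact ⟨abs_le.2 ⟨by linarith, h2⟩, abs_le.2 ⟨by linarith, h4⟩, h3⟩
  have hprod_bound : ∀ k, k ≤ N → ∀ᵐ ω ∂μ, |A ω ^ k * g ω ^ (N - k)| ≤ (z + 1) ^ N := by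
    intro k hk
    filter_upwards [hbound] with ω hω
    obtain ⟨h1, h2, -⟩ := hω
    rw [abs_mul, abs_pow, abs_pow]
    calc |A ω| ^ k * |g ω| ^ (N - k) ≤ (z + 1) ^ k * (z + 1) ^ (N - k) :=
          mul_le_mul (pow_le_pow_left₀ (abs_nonneg _) h1 k)
            (pow_le_pow_left₀ (abs_nonneg _) h2 _) (by positivity) (by positivity)
      _ = (z + 1) ^ N := by rw [← pow_add]; congr 1; omega
  have hIint : ∀ k, k ≤ N → Integrable (fun ω => A ω ^ k * g ω ^ (N - k)) μ := by
    intro k hk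
    refine (integrable_const ((z + 1) ^ N)).mono'
      (((hAmeas.pow_const k).mul (hgmeas.pow_const (N - k))).aestronglyMeasurable) ?_
    filter_upwards [hprod_bound k hk] with ω hω
    rw [Real.norm_eq_abs]; exact hω
  set c : ℕ → ℝ := fun k => (μ {ω | Y₀ ω = k}).toReal with hcdef
  set I : ℕ → ℝ := fun k => ∫ ω, A ω ^ k * g ω ^ (N - k) ∂μ with hIdef
  have hsplit : ∀ k ∈ Finset.range (N + 1),
      ∫ ω, (if Y₀ ω = k then (1 : ℝ) else 0) * (A ω ^ k * g ω ^ (N - k)) ∂μ = c k * I k := by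
    intro k hk
    have φmeas : Measurable (fun n : ℕ => if n = k then (1 : ℝ) else 0) := measurable_from_top
    have ψmeas : Measurable (fun pr : ℝ × ℝ =>
        (pr.2 * z + 1 - pr.2) ^ k * ((1 - pr.1) * z + pr.1) ^ (N - k)) := by fun_prop
    have hind := hindep.comp φmeas ψmeas
    have key := hind.integral_mul_eq_mul_integral ((φmeas.comp hY₀).aestronglyMeasurable)
      ((ψmeas.comp (hP.prodMk hR)).aestronglyMeasurable)
    have e2 : ∫ ω, (if Y₀ ω = k then (1 : ℝ) else 0) ∂μ = c k := by
      have hfi : (fun ω => if Y₀ ω = k then (1 : ℝ) else 0)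
          = Set.indicator {ω | Y₀ ω = k} (fun _ => (1 : ℝ)) := by
        ext ω; simp [Set.indicator_apply, Set.mem_setOf_eq]
      rw [hfi, integral_indicator_const _
        (show MeasurableSet {ω | Y₀ ω = k} from hY₀ (measurableSet_singleton k)),
        smul_eq_mul, mul_one, measureReal_def]
    calc ∫ ω, (if Y₀ ω = k then (1 : ℝ) else 0) * (A ω ^ k * g ω ^ (N - k)) ∂μ
        = (∫ ω, (if Y₀ ω = k then (1 : ℝ) else 0) ∂μ) * ∫ ω, A ω ^ k * g ω ^ (N - k) ∂μ := key
      _ = c k * I k := by rw [e2]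
  have hY₁N : ∀ᵐ ω ∂μ, Y₁ ω ≤ N := by
    rw [ae_iff]
    have hms : MeasurableSet {n : ℕ | ¬ n ≤ N} := (Set.to_countable _).measurableSet
    have h0 : {ω | ¬ Y₁ ω ≤ N} = Y₁ ⁻¹' {n | ¬ n ≤ N} := rfl
    rw [h0, ← Measure.map_apply hY₁ hms, hstat, Measure.map_apply hY₀ hms]
    have h1 : Y₀ ⁻¹' {n | ¬ n ≤ N} = ∅ := by
      ext ω; simp [hY₀N ω]
    rw [h1]; exact measure_empty
  have hmap : ∫ ω, (z : ℝ) ^ Y₀ ω ∂μ = ∫ ω, z ^ Y₁ ω ∂μ := by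
    have hf : AEStronglyMeasurable (fun n : ℕ => z ^ n) (Measure.map Y₀ μ) :=
      (measurable_from_top (f := fun n : ℕ => z ^ n)).aestronglyMeasurable
    rw [← integral_map hY₀.aemeasurable hf, ← hstat,
      integral_map hY₁.aemeasurable (hstat ▸ hf)]
  have hc'm : ∀ m, (μ {ω | Y₁ ω = m}).toReal = ∫ ω, convPMF N (Y₀ ω) (P ω) (R ω) m ∂μ := by
    intro m
    have h := hcond m Set.univ MeasurableSet.univ
    simpa using h
  have hconvmeas : ∀ m, Measurable fun ω => convPMF N (Y₀ ω) (P ω) (R ω) m := by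
    intro m
    exact meas_comp3 hY₀ hP hR (F := fun k p r => convPMF N k p r m)
      (fun k => by unfold convPMF binomPMF; fun_prop)
  have hconvint : ∀ m, m ≤ N → Integrable (fun ω => convPMF N (Y₀ ω) (P ω) (R ω) m) μ := by
    intro m hm
    refine (integrable_const (((N : ℝ) + 1) * 4 ^ N)).mono' (hconvmeas m).aestronglyMeasurable ?_
    filter_upwards [hPR] with ω hω
    obtain ⟨⟨hp0, hp1⟩, hr0, hr1⟩ := hω
    simpa [Real.norm_eq_abs] using
      convPMF_bound hp0.le hp1.le hr0.le hr1.le (hY₀N ω) hm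
  have hLHS : ∫ ω, (z : ℝ) ^ Y₁ ω ∂μ = ∑ k ∈ Finset.range (N + 1), c k * I k := by
    rw [pgf_expand μ hY₁ hY₁N z]
    calc ∑ m ∈ Finset.range (N + 1), (μ {ω | Y₁ ω = m}).toReal * z ^ m
        = ∑ m ∈ Finset.range (N + 1), ∫ ω, z ^ m * convPMF N (Y₀ ω) (P ω) (R ω) m ∂μ := by
          refine Finset.sum_congr rfl fun m hm => ?_
          rw [hc'm m, integral_const_mul, mul_comm]
      _ = ∫ ω, ∑ m ∈ Finset.range (N + 1), z ^ m * convPMF N (Y₀ ω) (P ω) (R ω) m ∂μ := by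
          rw [integral_finset_sum _ (fun m hm =>
            ((hconvint m (Nat.lt_succ_iff.1 (Finset.mem_range.1 hm))).const_mul _))]
      _ = ∫ ω, A ω ^ Y₀ ω * g ω ^ (N - Y₀ ω) ∂μ := by
          refine integral_congr_ae (Filter.Eventually.of_forall fun ω => ?_)
          show ∑ m ∈ Finset.range (N + 1), z ^ m * convPMF N (Y₀ ω) (P ω) (R ω) m
              = A ω ^ Y₀ ω * g ω ^ (N - Y₀ ω)
          rw [key_alg N (Y₀ ω) (hY₀N ω) (P ω) (R ω) z]
          have h1 : R ω * z + (1 - R ω) = A ω := by rw [hAdef]; ring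
          rw [h1]
      _ = ∑ k ∈ Finset.range (N + 1), c k * I k := by
          have hpt : ∀ ω, A ω ^ Y₀ ω * g ω ^ (N - Y₀ ω)
              = ∑ k ∈ Finset.range (N + 1),
                  (if Y₀ ω = k then (1 : ℝ) else 0) * (A ω ^ k * g ω ^ (N - k)) := by
            intro ω
            simp only [ite_mul, one_mul, zero_mul]
            rw [Finset.sum_ite_eq, if_pos (Finset.mem_range.2 (Nat.lt_succ_of_le (hY₀N ω)))]
          have hint2 : ∀ k ∈ Finset.range (N + 1), Integrable
              (fun ω => (if Y₀ ω = k then (1 : ℝ) else 0) * (A ω ^ k * g ω ^ (N - k))) μ := by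
            intro k hk
            have hkN : k ≤ N := Nat.lt_succ_iff.1 (Finset.mem_range.1 hk)
            refine (integrable_const ((z + 1) ^ N)).mono'
              ((((measurable_from_top (f := fun n : ℕ => if n = k then (1 : ℝ) else 0)).comp
                hY₀).mul ((hAmeas.pow_const k).mul (hgmeas.pow_const (N - k)))).aestronglyMeasurable) ?_
            filter_upwards [hprod_bound k hkN] with ω hω
            rw [Real.norm_eq_abs, abs_mul]
            have hle1 : |(if Y₀ ω = k then (1 : ℝ) else 0)| ≤ 1 := by
              split <;> simp
            calc |(if Y₀ ω = k then (1 : ℝ) else 0)| * |A ω ^ k * g ω ^ (N - k)|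
                ≤ 1 * ((z + 1) ^ N) := mul_le_mul hle1 hω (abs_nonneg _) one_pos.le
              _ = (z + 1) ^ N := one_mul _
          rw [integral_congr_ae (Filter.Eventually.of_forall hpt), integral_finset_sum _ hint2]
          exact Finset.sum_congr rfl hsplit
  have hRHS : ∫ ω, g ω ^ N * (∫ ω', (A ω / g ω) ^ Y₀ ω' ∂μ) ∂μ
      = ∑ k ∈ Finset.range (N + 1), c k * I k := by
    have hinner : ∀ ω : Ω, (∫ ω', (A ω / g ω) ^ Y₀ ω' ∂μ)
        = ∑ k ∈ Finset.range (N + 1), c k * (A ω / g ω) ^ k :=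
      fun ω => pgf_expand μ hY₀ hY₀N' _
    calc ∫ ω, g ω ^ N * (∫ ω', (A ω / g ω) ^ Y₀ ω' ∂μ) ∂μ
        = ∫ ω, ∑ k ∈ Finset.range (N + 1), c k * (A ω ^ k * g ω ^ (N - k)) ∂μ := by
          refine integral_congr_ae ?_
          filter_upwards [hbound] with ω hω
          obtain ⟨-, -, hg⟩ := hω
          rw [hinner ω, Finset.mul_sum]
          refine Finset.sum_congr rfl fun k hk => ?_
          have hkN : k ≤ N := Nat.lt_succ_iff.1 (Finset.mem_range.1 hk)
          have hgN : g ω ^ N = g ω ^ (N - k) * g ω ^ k := (pow_sub_mul_pow _ hkN).symm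
          have hgk : g ω ^ k ≠ 0 := (pow_pos hg k).ne'
          rw [div_pow, hgN]
          field_simp
      _ = ∑ k ∈ Finset.range (N + 1), c k * I k := by
          rw [integral_finset_sum _ (fun k hk =>
            ((hIint k (Nat.lt_succ_iff.1 (Finset.mem_range.1 hk))).const_mul _))]
          exact Finset.sum_congr rfl fun k _ => integral_const_mul _ _
  rw [hmap, hLHS, ← hRHS]
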